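/- For any 0 < γ ≤ 1/2 and integer d ≥ 1, there exists a finite set V ⊆ S^{d-1} such that (1) any two distinct w₁, w₂ ∈ V satisfy arccos(w₁ · w₂) ≥ πγ, and (2) |V| ≥ (√d/2)·(1/(2πγ))^{d-1} - 1. -/

import Mathlib

open Real MeasureTheory Metric
open scoped RealInnerProductSpace


noncomputable def myB (n : ℕ) : ℝ := Real.sqrt π ^ n / Real.Gamma (n / 2 + 1)

lemma myB_pos (n : ℕ) : 0 < myB n := by
  apply div_pos (pow_pos (Real.sqrt_pos.mpr Real.pi_pos) n)
  apply Real.Gamma_pos_of_pos; positivity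

lemma myB_zero : myB 0 = 1 := by simp [myB, Real.Gamma_one]

lemma myB_one : myB 1 = 2 := by
  have h : Real.Gamma ((1:ℕ) / 2 + 1) = (1/2) * Real.Gamma (1/2) := by
    push_cast
    rw [Real.Gamma_add_one (by norm_num)]
  rw [myB, h, Real.Gamma_one_half_eq]
  have : Real.sqrt π ≠ 0 := ne_of_gt (Real.sqrt_pos.mpr Real.pi_pos)
  field_simp

lemma myB_succ_succ (n : ℕ) : myB (n + 2) = 2 * π / (n + 2) * myB n := by
  have h1 : ((n + 2 : ℕ) : ℝ) / 2 + 1 = (((n:ℝ)/2 + 1) + 1) := by push_cast; ring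
  have h2 : Real.Gamma (((n:ℝ)/2 + 1) + 1) = ((n:ℝ)/2 + 1) * Real.Gamma ((n:ℝ)/2+1) :=
    Real.Gamma_add_one (by positivity)
  have h3 : Real.sqrt π ^ (n + 2) = π * Real.sqrt π ^ n := by
    rw [pow_add, Real.sq_sqrt Real.pi_pos.le]; ring
  have hΓ : Real.Gamma ((n:ℝ)/2+1) ≠ 0 := ne_of_gt (Real.Gamma_pos_of_pos (by positivity))
  have hn2 : ((n:ℝ)/2 + 1) ≠ 0 := by positivity
  rw [myB, myB, h1, h2, h3]
  field_simp

lemma myB_key : ∀ n : ℕ, Real.sqrt (n+1) * myB n ≤ 2^(n+1) * myB (n+1) := by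
  have sqrtle : ∀ a b : ℝ, 0 ≤ a → 0 ≤ b → a^2 ≤ b^2 → a ≤ b := by
    intro a b ha hb h
    calc a = Real.sqrt (a^2) := (Real.sqrt_sq ha).symm
    _ ≤ Real.sqrt (b^2) := Real.sqrt_le_sqrt h
    _ = b := Real.sqrt_sq hb
  have H : ∀ n : ℕ, (Real.sqrt ((n:ℝ)+1) * myB n ≤ 2^(n+1) * myB (n+1)) ∧
      (Real.sqrt ((n:ℝ)+2) * myB (n+1) ≤ 2^(n+2) * myB (n+2)) := by
    intro n
    induction n with
    | zero =>
      constructor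
      · rw [myB_zero, myB_one, show ((0:ℕ):ℝ) + 1 = 1 by norm_num, Real.sqrt_one]
        norm_num
      · have hB2 : myB 2 = π := by
          have := myB_succ_succ 0
          rw [myB_zero] at this
          rw [this]; push_cast; ring
        rw [hB2, myB_one, show ((0:ℕ):ℝ) + 2 = 2 by norm_num]
        have h2 : Real.sqrt 2 ≤ 2 := by
          apply sqrtle _ _ (Real.sqrt_nonneg _) (by norm_num)
          rw [Real.sq_sqrt (by norm_num : (0:ℝ) ≤ 2)]; norm_num
        have h3 : Real.sqrt 2 * 2 ≤ 4 := by linarith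
        have h4 : (2:ℝ)^(0+2) = 4 := by norm_num
        rw [h4]
        nlinarith [Real.pi_gt_three]
    | succ k ih =>
      constructor
      · have := ih.2
        have e : ((k+1:ℕ):ℝ) + 1 = (k:ℝ) + 2 := by push_cast; ring
        rw [e]
        exact this
      have hk1 : myB (k+1+2) = 2*π/(k+3) * myB (k+1) := by
        rw [myB_succ_succ (k+1)]; push_cast; ring_nf
      have hk2 : myB (k+2) = 2*π/(k+2) * myB k := myB_succ_succ k
      have ih1 := ih.1
      have hBk := myB_pos k
      have hBk1 := myB_pos (k+1)
      have hπ := Real.pi_pos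
      -- goal : √(k+3) * myB (k+2) ≤ 2^(k+3) * myB (k+3)
      have key : Real.sqrt ((k:ℝ)+3) * ((k:ℝ)+3) ≤ 4 * Real.sqrt ((k:ℝ)+1) * ((k:ℝ)+2) := by
        apply sqrtle _ _ (by positivity) (by positivity)
        have h1 : Real.sqrt ((k:ℝ)+3) ^ 2 = (k:ℝ)+3 := Real.sq_sqrt (by positivity)
        have h2 : Real.sqrt ((k:ℝ)+1) ^ 2 = (k:ℝ)+1 := Real.sq_sqrt (by positivity)
        rw [mul_pow, mul_pow, mul_pow, h1, h2]
        have hk0 : (0:ℝ) ≤ (k:ℝ) := Nat.cast_nonneg k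
        nlinarith [hk0]
      have e1 : ((k+1:ℕ):ℝ) + 2 = (k:ℝ) + 3 := by push_cast; ring
      have e2 : ((k+1:ℕ):ℝ) + 1 = (k:ℝ) + 2 := by push_cast; ring
      have e3 : ((k:ℕ):ℝ) + 1 = (k:ℝ) + 1 := rfl
      rw [show k+1+2 = k+3 from rfl] at hk1
      rw [e1, hk1, hk2]
      have h2pow : (0:ℝ) < 2^(k+1) := by positivity
      have hs1 : 0 ≤ Real.sqrt ((k:ℝ)+1) := Real.sqrt_nonneg _
      have hs3 : 0 ≤ Real.sqrt ((k:ℝ)+3) := Real.sqrt_nonneg _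
      -- from ih1 : √(k+1) * myB k ≤ 2^(k+1) * myB (k+1)
      rw [e3] at ih1
      have hkk : (0:ℝ) < (k:ℝ) + 2 := by positivity
      have hkk3 : (0:ℝ) < (k:ℝ) + 3 := by positivity
      rw [pow_succ, pow_succ]
      have step : Real.sqrt ((k:ℝ)+3) * (2*π/((k:ℝ)+2) * myB k)
          ≤ 4 * (2*π/((k:ℝ)+3)) * (Real.sqrt ((k:ℝ)+1) * myB k) := by
        rw [div_mul_eq_mul_div, ← mul_div_assoc]
        rw [div_le_iff₀ hkk]
        have expand : 4 * (2*π/((k:ℝ)+3)) * (Real.sqrt ((k:ℝ)+1) * myB k) * ((k:ℝ)+2)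
            = (2*π*myB k/((k:ℝ)+3)) * (4 * Real.sqrt ((k:ℝ)+1) * ((k:ℝ)+2)) := by
          field_simp
        have expand2 : Real.sqrt ((k:ℝ)+3) * (2*π*myB k)
            = (2*π*myB k/((k:ℝ)+3)) * (Real.sqrt ((k:ℝ)+3) * ((k:ℝ)+3)) := by
          field_simp
        rw [expand, expand2]
        apply mul_le_mul_of_nonneg_left key (by positivity)
      calc Real.sqrt ((k:ℝ)+3) * (2*π/((k:ℝ)+2) * myB k)
          ≤ 4 * (2*π/((k:ℝ)+3)) * (Real.sqrt ((k:ℝ)+1) * myB k) := step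
        _ ≤ 4 * (2*π/((k:ℝ)+3)) * (2^(k+1) * myB (k+1)) := by
            apply mul_le_mul_of_nonneg_left ih1 (by positivity)
        _ = 2^(k+1) * 2 * 2 * (2*π/((k:ℝ)+3) * myB (k+1)) := by ring
  exact fun n => (H n).1

lemma volume_ball_one (d : ℕ) [NeZero d] :
    volume (ball (0 : EuclideanSpace ℝ (Fin d)) 1) = ENNReal.ofReal (myB d) := by
  haveI : Nonempty (Fin d) := Fin.pos_iff_nonempty.mp (Nat.pos_of_ne_zero (NeZero.ne d))
  rw [EuclideanSpace.volume_ball]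
  simp [myB]

lemma volume_cyl (d : ℕ) (hd : 2 ≤ d) (θ : ℝ) (hθ : 0 ≤ θ) (v : EuclideanSpace ℝ (Fin d))
    (hv : ‖v‖ = 1) :
    volume {z : EuclideanSpace ℝ (Fin d) | ⟪v, z⟫ ∈ Set.Icc (0:ℝ) 1 ∧ ‖z - ⟪v, z⟫ • v‖ ≤ θ}
      = ENNReal.ofReal (θ ^ (d-1)) * ENNReal.ofReal (myB (d-1)) := by
  haveI : NeZero d := ⟨by omega⟩
  set e0 : EuclideanSpace ℝ (Fin d) := EuclideanSpace.single (0 : Fin d) (1:ℝ) with he0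
  have he0n : ‖e0‖ = 1 := by
    rw [he0]
    exact (EuclideanSpace.norm_single (0 : Fin d) (1:ℝ)).trans norm_one
  -- the subtype index
  set κ := {i : Fin d // ¬ i = 0}
  haveI : Nonempty κ := ⟨⟨⟨1, by omega⟩, by simp [Fin.ext_iff]⟩⟩
  have hcardκ : Fintype.card κ = d - 1 := by
    rw [Fintype.card_subtype_compl, Fintype.card_subtype_eq, Fintype.card_fin]
  -- the pi-space set
  set A : Set (Fin d → ℝ) :=
    {f | f 0 ∈ Set.Icc (0:ℝ) 1 ∧ ∑ i : κ, (f i.1)^2 ≤ θ^2} with hA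
  have hmeasA : MeasurableSet A := by
    apply MeasurableSet.inter
    · have h : Measurable (fun f : Fin d → ℝ => f 0) := measurable_pi_apply 0
      exact h measurableSet_Icc
    · have hsum : Measurable (fun f : Fin d → ℝ => ∑ i : κ, (f i.1)^2) :=
        Finset.measurable_sum Finset.univ (fun i _ => ((measurable_pi_apply i.1).pow_const 2))
      exact measurableSet_le hsum measurable_const
  -- the e0 cylinder
  set S : Set (EuclideanSpace ℝ (Fin d)) :=
    {z : EuclideanSpace ℝ (Fin d) | ⟪e0, z⟫ ∈ Set.Icc (0:ℝ) 1 ∧ ‖z - ⟪e0, z⟫ • e0‖ ≤ θ} with hS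
  have hinner : ∀ z : EuclideanSpace ℝ (Fin d), ⟪e0, z⟫ = z 0 := by
    intro z
    rw [he0, EuclideanSpace.inner_single_left]
    simp
  have hnorm2 : ∀ z : EuclideanSpace ℝ (Fin d), ‖z - z 0 • e0‖^2 = ∑ i : κ, (z i.1)^2 := by
    intro z
    rw [EuclideanSpace.norm_eq, Real.sq_sqrt (by positivity)]
    have hcoord : ∀ i : Fin d, (z - z 0 • e0) i = if ¬ i = 0 then z i else 0 := by
      intro i
      by_cases h : i = 0
      · subst h
        simp [he0, PiLp.sub_apply, PiLp.smul_apply, EuclideanSpace.single_apply]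
      · simp [he0, PiLp.sub_apply, PiLp.smul_apply, EuclideanSpace.single_apply, h]
    have : ∀ i : Fin d, ‖(z - z 0 • e0) i‖^2 = if ¬ i = 0 then (z i)^2 else 0 := by
      intro i
      rw [hcoord i]
      split_ifs <;> simp [Real.norm_eq_abs, sq_abs]
    rw [Finset.sum_congr rfl (fun i _ => this i), ← Finset.sum_filter]
    exact Finset.sum_subtype _ (by simp) _
  have hSA : S = (MeasurableEquiv.toLp 2 (Fin d → ℝ)).symm ⁻¹' A := by
    ext z
    have hme : (MeasurableEquiv.toLp 2 (Fin d → ℝ)).symm z = (z : Fin d → ℝ) := rfl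
    simp only [hS, hA, Set.mem_setOf_eq, Set.mem_preimage, hme, hinner z]
    constructor
    · rintro ⟨h1, h2⟩
      refine ⟨h1, ?_⟩
      have h2' : ‖z - z 0 • e0‖^2 ≤ θ^2 := by
        apply pow_le_pow_left₀ (norm_nonneg _) h2
      rwa [hnorm2 z] at h2'
    · rintro ⟨h1, h2⟩
      refine ⟨h1, ?_⟩
      rw [← hnorm2 z] at h2
      calc ‖z - z 0 • e0‖ = Real.sqrt (‖z - z 0 • e0‖^2) :=
            (Real.sqrt_sq (norm_nonneg _)).symm
        _ ≤ Real.sqrt (θ^2) := Real.sqrt_le_sqrt h2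
        _ = θ := Real.sqrt_sq hθ
  -- split A as a product
  letI : Fintype {i : Fin d // i = 0} := Subtype.fintype _
  haveI : Unique {i : Fin d // i = 0} := ⟨⟨⟨0, rfl⟩⟩, fun a => Subtype.ext a.2⟩
  set S₁ : Set ({i : Fin d // i = 0} → ℝ) := {g | g ⟨0, rfl⟩ ∈ Set.Icc (0:ℝ) 1} with hS₁def
  set S₂ : Set (κ → ℝ) := {g | ∑ i : κ, (g i)^2 ≤ θ^2} with hS₂def
  have hmeasS₁ : MeasurableSet S₁ := (measurable_pi_apply _) measurableSet_Icc
  have hmeasS₂ : MeasurableSet S₂ := by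
    have hsum : Measurable (fun g : κ → ℝ => ∑ i : κ, (g i)^2) :=
      Finset.measurable_sum Finset.univ (fun i _ => ((measurable_pi_apply i).pow_const 2))
    exact measurableSet_le hsum measurable_const
  have hq : A = (MeasurableEquiv.piEquivPiSubtypeProd (fun _ : Fin d => ℝ)
      (fun i => i = 0)) ⁻¹' (S₁ ×ˢ S₂) := by
    ext f
    simp [MeasurableEquiv.piEquivPiSubtypeProd, Equiv.piEquivPiSubtypeProd, Set.mem_prod,
      hS₁def, hS₂def, hA]
  have hvolS₁ : volume S₁ = 1 := by
    have h1 : S₁ = Set.pi Set.univ (fun _ : {i : Fin d // i = 0} => Set.Icc (0:ℝ) 1) := by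
      ext g
      simp only [hS₁def, Set.mem_setOf_eq, Set.mem_pi, Set.mem_univ, forall_true_left]
      constructor
      · intro h i; rwa [Subsingleton.elim i ⟨0, rfl⟩]
      · intro h; exact h ⟨0, rfl⟩
    rw [h1, volume_pi_pi, Real.volume_Icc]
    simp
  have hvolS₂ : volume S₂ = ENNReal.ofReal (θ ^ (d-1)) * ENNReal.ofReal (myB (d-1)) := by
    have h1 : S₂ = (MeasurableEquiv.toLp 2 (κ → ℝ)).symm.symm ⁻¹'
        (closedBall (0 : EuclideanSpace ℝ κ) θ) := by
      ext g
      have hg : ((MeasurableEquiv.toLp 2 (κ → ℝ)).symm.symm g : κ → ℝ) = g := rfl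
      simp only [hS₂def, Set.mem_setOf_eq, Set.mem_preimage, mem_closedBall_zero_iff]
      rw [EuclideanSpace.norm_eq]
      simp_rw [hg]
      rw [Real.sqrt_le_left hθ]
      simp [Real.norm_eq_abs, sq_abs]
    rw [h1, ((EuclideanSpace.volume_preserving_symm_measurableEquiv_toLp κ).symm).measure_preimage
      measurableSet_closedBall.nullMeasurableSet, EuclideanSpace.volume_closedBall, hcardκ,
      ← ENNReal.ofReal_pow hθ]
    rfl
  have hvolS : volume S = ENNReal.ofReal (θ ^ (d-1)) * ENNReal.ofReal (myB (d-1)) := by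
    rw [hSA, (EuclideanSpace.volume_preserving_symm_measurableEquiv_toLp (Fin d)).measure_preimage
      hmeasA.nullMeasurableSet, hq,
      (volume_preserving_piEquivPiSubtypeProd (fun _ : Fin d => ℝ)
        (fun i : Fin d => i = 0)).measure_preimage
        (hmeasS₁.prod hmeasS₂).nullMeasurableSet]
    rw [Measure.volume_eq_prod, Measure.prod_prod]
    show volume S₁ * volume S₂ = ENNReal.ofReal (θ ^ (d-1)) * ENNReal.ofReal (myB (d-1))
    rw [hvolS₁, hvolS₂, one_mul]
  -- reflect v to e0
  have hmeasS : MeasurableSet S := by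
    rw [hSA]
    exact (MeasurableEquiv.toLp 2 (Fin d → ℝ)).symm.measurable hmeasA
  set f := Submodule.reflection (ℝ ∙ (v - e0))ᗮ with hf
  have hfv : f v = e0 := Submodule.reflection_sub (by rw [hv, he0n])
  have hpre : {z : EuclideanSpace ℝ (Fin d) | ⟪v, z⟫ ∈ Set.Icc (0:ℝ) 1 ∧ ‖z - ⟪v, z⟫ • v‖ ≤ θ}
      = f ⁻¹' S := by
    ext z
    have h1 : ⟪e0, f z⟫ = ⟪v, z⟫ := by
      rw [← hfv, LinearIsometryEquiv.inner_map_map]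
    have h2 : ‖f z - ⟪e0, f z⟫ • e0‖ = ‖z - ⟪v, z⟫ • v‖ := by
      rw [h1, ← hfv]
      rw [show f z - ⟪v, z⟫ • f v = f (z - ⟪v, z⟫ • v) by simp]
      exact f.norm_map _
    simp only [Set.mem_preimage, hS, Set.mem_setOf_eq]
    rw [h2, h1]
  rw [hpre, f.measurePreserving.measure_preimage hmeasS.nullMeasurableSet, hvolS]

lemma exists_max_sep (d : ℕ) (ε : ℝ) (hε : 0 < ε) :
    ∃ V : Finset (EuclideanSpace ℝ (Fin d)),
      (∀ w ∈ V, ‖w‖ = 1) ∧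
      (∀ w₁ ∈ V, ∀ w₂ ∈ V, w₁ ≠ w₂ → ε ≤ dist w₁ w₂) ∧
      (∀ x : EuclideanSpace ℝ (Fin d), ‖x‖ = 1 → ∃ v ∈ V, dist x v < ε) := by
  classical
  set P : Finset (EuclideanSpace ℝ (Fin d)) → Prop := fun V =>
    (∀ w ∈ V, ‖w‖ = 1) ∧ (∀ w₁ ∈ V, ∀ w₂ ∈ V, w₁ ≠ w₂ → ε ≤ dist w₁ w₂) with hP
  obtain ⟨t, hts, htfin, htcover⟩ :=
    (isCompact_sphere (0 : EuclideanSpace ℝ (Fin d)) 1).finite_cover_balls (half_pos hε)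
  have hbound : ∀ V, P V → V.card ≤ htfin.toFinset.card := by
    intro V hV
    set g : EuclideanSpace ℝ (Fin d) → EuclideanSpace ℝ (Fin d) := fun v =>
      if h : ∃ c ∈ t, v ∈ ball c (ε/2) then h.choose else v with hg
    apply Finset.card_le_card_of_injOn g
    · intro v hv
      have hvs : v ∈ sphere (0 : EuclideanSpace ℝ (Fin d)) 1 :=
        mem_sphere_zero_iff_norm.mpr (hV.1 v hv)
      have hcov := htcover hvs
      simp only [Set.mem_iUnion] at hcov
      obtain ⟨c, hc, hvc⟩ := hcov
      have hex : ∃ c ∈ t, v ∈ ball c (ε/2) := ⟨c, hc, hvc⟩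
      rw [Set.Finite.coe_toFinset]
      rw [hg]
      simp only [dif_pos hex]
      exact hex.choose_spec.1
    · intro v₁ hv₁ v₂ hv₂ heq
      by_contra hne
      have h₁ : ∃ c ∈ t, v₁ ∈ ball c (ε/2) := by
        have hvs : v₁ ∈ sphere (0 : EuclideanSpace ℝ (Fin d)) 1 :=
          mem_sphere_zero_iff_norm.mpr (hV.1 v₁ hv₁)
        have hcov := htcover hvs
        simp only [Set.mem_iUnion] at hcov
        obtain ⟨c, hc, hvc⟩ := hcov
        exact ⟨c, hc, hvc⟩
      have h₂ : ∃ c ∈ t, v₂ ∈ ball c (ε/2) := by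
        have hvs : v₂ ∈ sphere (0 : EuclideanSpace ℝ (Fin d)) 1 :=
          mem_sphere_zero_iff_norm.mpr (hV.1 v₂ hv₂)
        have hcov := htcover hvs
        simp only [Set.mem_iUnion] at hcov
        obtain ⟨c, hc, hvc⟩ := hcov
        exact ⟨c, hc, hvc⟩
      rw [hg] at heq
      simp only [dif_pos h₁, dif_pos h₂] at heq
      have hd₁ : dist v₁ h₁.choose < ε/2 := mem_ball.mp h₁.choose_spec.2
      have hd₂ : dist v₂ h₂.choose < ε/2 := mem_ball.mp h₂.choose_spec.2
      rw [← heq] at hd₂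
      have : dist v₁ v₂ < ε := by
        calc dist v₁ v₂ ≤ dist v₁ h₁.choose + dist v₂ h₁.choose := dist_triangle_right _ _ _
          _ < ε/2 + ε/2 := add_lt_add hd₁ hd₂
          _ = ε := by ring
      have := hV.2 v₁ hv₁ v₂ hv₂ hne
      linarith
  set Sc : Set ℕ := {n | ∃ V, P V ∧ V.card = n} with hSc
  have h0 : 0 ∈ Sc := ⟨∅, ⟨by simp, by simp⟩, rfl⟩
  have hbdd : BddAbove Sc := by
    refine ⟨htfin.toFinset.card, ?_⟩
    rintro n ⟨V, hV, rfl⟩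
    exact hbound V hV
  obtain ⟨V, hPV, hVcard⟩ := Nat.sSup_mem ⟨0, h0⟩ hbdd
  refine ⟨V, hPV.1, hPV.2, ?_⟩
  intro x hx
  by_contra hcon
  push_neg at hcon
  have hxV : x ∉ V := by
    intro hxV
    have := hcon x hxV
    simp at this
    linarith
  have hPW : P (insert x V) := by
    constructor
    · intro w hw
      rcases Finset.mem_insert.mp hw with h | h
      · subst h; exact hx
      · exact hPV.1 w h
    · intro w₁ h₁ w₂ h₂ hne
      rcases Finset.mem_insert.mp h₁ with e₁ | e₁ <;> rcases Finset.mem_insert.mp h₂ with e₂ | e₂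
      · subst e₁; subst e₂; exact absurd rfl hne
      · subst e₁; exact hcon w₂ e₂
      · subst e₂; rw [dist_comm]; exact hcon w₁ e₁
      · exact hPV.2 w₁ e₁ w₂ e₂ hne
  have : V.card + 1 ∈ Sc := ⟨insert x V, hPW, by rw [Finset.card_insert_of_notMem hxV]⟩
  have hle := le_csSup hbdd this
  rw [hVcard] at hle
  omega

set_option maxHeartbeats 1000000 in
theorem stmt_16 (γ : ℝ) (hγ0 : 0 < γ) (hγ : γ ≤ 1 / 2) (d : ℕ) (hd : 1 ≤ d) :
    ∃ V : Finset (EuclideanSpace ℝ (Fin d)),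
      (∀ w ∈ V, ‖w‖ = 1) ∧
      (∀ w₁ ∈ V, ∀ w₂ ∈ V, w₁ ≠ w₂ → Real.arccos ⟪w₁, w₂⟫ ≥ Real.pi * γ) ∧
      (V.card : ℝ) ≥ Real.sqrt d / 2 * (1 / (2 * Real.pi * γ)) ^ (d - 1) - 1 := by
  have hπ := Real.pi_pos
  by_cases hd1 : d = 1
  · subst hd1
    refine ⟨∅, by simp, by simp, ?_⟩
    simp only [Finset.card_empty, Nat.cast_zero, Nat.cast_one]
    norm_num
  · have hd2 : 2 ≤ d := by omega
    haveI : NeZero d := ⟨by omega⟩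
    set θ := π * γ with hθdef
    have hθ0 : 0 < θ := mul_pos hπ hγ0
    have hθπ2 : θ ≤ π / 2 := by rw [hθdef]; nlinarith
    have hθπ : θ ≤ π := by linarith
    have hcosθlt : Real.cos θ < 1 := by
      have := Real.cos_lt_cos_of_nonneg_of_le_pi (le_refl 0) hθπ hθ0
      rwa [Real.cos_zero] at this
    have hcosθ0 : 0 ≤ Real.cos θ := Real.cos_nonneg_of_mem_Icc ⟨by linarith, hθπ2⟩
    set ε := Real.sqrt (2 - 2 * Real.cos θ) with hεdef
    have hε2 : ε^2 = 2 - 2*Real.cos θ := Real.sq_sqrt (by linarith)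
    have hε0 : 0 < ε := Real.sqrt_pos.mpr (by linarith)
    obtain ⟨V, hVnorm, hVsep, hVmax⟩ := exists_max_sep d ε hε0
    have hip : ∀ w₁ w₂ : EuclideanSpace ℝ (Fin d), ‖w₁‖ = 1 → ‖w₂‖ = 1 →
        dist w₁ w₂ ^ 2 = 2 - 2 * ⟪w₁, w₂⟫ := by
      intro w₁ w₂ h1 h2
      rw [dist_eq_norm, norm_sub_sq_real, h1, h2]; ring
    refine ⟨V, hVnorm, ?_, ?_⟩
    · intro w₁ h₁ w₂ h₂ hne
      have hsep := hVsep w₁ h₁ w₂ h₂ hne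
      have h2 : ε^2 ≤ dist w₁ w₂ ^2 := by
        apply pow_le_pow_left₀ hε0.le hsep
      rw [hε2, hip w₁ w₂ (hVnorm _ h₁) (hVnorm _ h₂)] at h2
      have hinner : ⟪w₁, w₂⟫ ≤ Real.cos θ := by linarith
      have harc : Real.arccos (Real.cos θ) ≤ Real.arccos ⟪w₁, w₂⟫ := by
        rw [Real.arccos_eq_pi_div_two_sub_arcsin, Real.arccos_eq_pi_div_two_sub_arcsin]
        have := Real.monotone_arcsin hinner
        linarith
      rw [Real.arccos_cos hθ0.le hθπ] at harc
      exact harc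
    · -- cardinality bound
      set K : EuclideanSpace ℝ (Fin d) → Set (EuclideanSpace ℝ (Fin d)) := fun v =>
        {z | ⟪v, z⟫ ∈ Set.Icc (0:ℝ) 1 ∧ ‖z - ⟪v, z⟫ • v‖ ≤ θ} with hK
      have hVne : V.Nonempty := by
        obtain ⟨v, hv, -⟩ := hVmax (EuclideanSpace.single (0 : Fin d) (1:ℝ))
          ((EuclideanSpace.norm_single _ _).trans norm_one)
        exact ⟨v, hv⟩
      have hcover : ball (0 : EuclideanSpace ℝ (Fin d)) 1 ⊆ ⋃ v ∈ V, K v := by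
        intro y hy
        by_cases hy0 : y = 0
        · obtain ⟨v, hv⟩ := hVne
          refine Set.mem_biUnion hv ?_
          subst hy0
          refine ⟨⟨?_, ?_⟩, ?_⟩ <;> simp [hθ0.le]
        · set x := ‖y‖⁻¹ • y with hx
          have hy00 : ‖y‖ ≠ 0 := fun h => hy0 (norm_eq_zero.mp h)
          have hxn : ‖x‖ = 1 := by
            rw [hx, norm_smul, norm_inv, norm_norm, inv_mul_cancel₀ hy00]
          obtain ⟨v, hvV, hvd⟩ := hVmax x hxn
          have hvn := hVnorm v hvV
          have hiv : Real.cos θ < ⟪v, x⟫ := by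
            have hlt : dist x v ^ 2 < ε ^ 2 := by
              apply pow_lt_pow_left₀ hvd dist_nonneg (by norm_num)
            rw [hε2, hip x v hxn hvn] at hlt
            rw [real_inner_comm]
            linarith
          have hvx1 : ⟪v, x⟫ ≤ 1 := by
            have := real_inner_le_norm v x
            rwa [hvn, hxn, one_mul] at this
          have hyx : y = ‖y‖ • x := by
            rw [hx, smul_smul, mul_inv_cancel₀ hy00, one_smul]
          have hy1 : ‖y‖ < 1 := mem_ball_zero_iff.mp hy
          have hivy : ⟪v, y⟫ = ‖y‖ * ⟪v, x⟫ := by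
            conv_lhs => rw [hyx]
            rw [real_inner_smul_right]
          refine Set.mem_biUnion hvV ⟨⟨?_, ?_⟩, ?_⟩
          · rw [hivy]
            exact mul_nonneg (norm_nonneg y) (le_trans hcosθ0 hiv.le)
          · rw [hivy]
            nlinarith [norm_nonneg y, hy1, hvx1, hcosθ0, hiv]
          · -- norm bound
            have hsq : ‖y - ⟪v, y⟫ • v‖^2 = ‖y‖^2 * (1 - ⟪v, x⟫^2) := by
              have hivy2 : ⟪y, v⟫ = ‖y‖ * ⟪v, x⟫ := by rw [real_inner_comm]; exact hivy
              rw [norm_sub_sq_real, real_inner_smul_right, real_inner_comm y v, norm_smul,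
                hvn, mul_one, Real.norm_eq_abs, sq_abs, hivy2]
              ring
            have hsinb : Real.sin θ ≤ θ := Real.sin_le hθ0.le
            have hsin0 : 0 ≤ Real.sin θ := Real.sin_nonneg_of_nonneg_of_le_pi hθ0.le hθπ
            have hsinsq : Real.sin θ ^ 2 = 1 - Real.cos θ ^ 2 := Real.sin_sq θ
            have hb : ‖y - ⟪v, y⟫ • v‖^2 ≤ θ^2 := by
              rw [hsq]
              have h1c : 1 - ⟪v, x⟫^2 ≤ Real.sin θ^2 := by nlinarith [hiv, hcosθ0]
              have hsinθ2 : Real.sin θ^2 ≤ θ^2 := by nlinarith [hsinb, hsin0]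
              have hy2 : ‖y‖^2 ≤ 1 := by nlinarith [norm_nonneg y, hy1]
              have h1c0 : 0 ≤ 1 - ⟪v, x⟫^2 := by nlinarith [hvx1, hiv, hcosθ0]
              calc ‖y‖^2 * (1 - ⟪v, x⟫^2) ≤ 1 * (1 - ⟪v, x⟫^2) :=
                    mul_le_mul_of_nonneg_right hy2 h1c0
                _ ≤ θ^2 := by linarith
            calc ‖y - ⟪v, y⟫ • v‖ = Real.sqrt (‖y - ⟪v, y⟫ • v‖^2) :=
                  (Real.sqrt_sq (norm_nonneg _)).symm
              _ ≤ Real.sqrt (θ^2) := Real.sqrt_le_sqrt hb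
              _ = θ := Real.sqrt_sq hθ0.le
      have hKvol : ∀ v ∈ V, volume (K v) = ENNReal.ofReal (θ^(d-1)) * ENNReal.ofReal (myB (d-1)) :=
        fun v hv => volume_cyl d hd2 θ hθ0.le v (hVnorm v hv)
      have hsum : ENNReal.ofReal (myB d)
          ≤ (V.card : ENNReal) * (ENNReal.ofReal (θ^(d-1)) * ENNReal.ofReal (myB (d-1))) := by
        calc ENNReal.ofReal (myB d)
            = volume (ball (0 : EuclideanSpace ℝ (Fin d)) 1) := (volume_ball_one d).symm
          _ ≤ volume (⋃ v ∈ V, K v) := measure_mono hcover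
          _ ≤ ∑ v ∈ V, volume (K v) := measure_biUnion_finset_le V K
          _ = ∑ _v ∈ V, (ENNReal.ofReal (θ^(d-1)) * ENNReal.ofReal (myB (d-1))) :=
              Finset.sum_congr rfl hKvol
          _ = (V.card : ENNReal) * (ENNReal.ofReal (θ^(d-1)) * ENNReal.ofReal (myB (d-1))) := by
              rw [Finset.sum_const, nsmul_eq_mul]
      have hθpow : (0:ℝ) < θ^(d-1) := pow_pos hθ0 _
      have hBm := myB_pos (d-1)
      have hBd := myB_pos d
      have hsum' : ENNReal.ofReal (myB d)
          ≤ ENNReal.ofReal ((V.card : ℝ) * (θ^(d-1) * myB (d-1))) := by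
        rw [ENNReal.ofReal_mul (by positivity), ENNReal.ofReal_mul (by positivity),
          ENNReal.ofReal_natCast]
        exact hsum
      have h1 : myB d ≤ (V.card : ℝ) * (θ^(d-1) * myB (d-1)) :=
        (ENNReal.ofReal_le_ofReal_iff (by positivity)).mp hsum'
      -- the key inequality
      have hc : ((d-1:ℕ):ℝ) + 1 = (d:ℝ) := by
        rw [Nat.cast_sub hd]; push_cast; ring
      have hkey := myB_key (d-1)
      rw [hc, show d - 1 + 1 = d from by omega] at hkey
      -- hkey : √d * myB (d-1) ≤ 2^d * myB d
      have h2d : (2:ℝ)^d = 2 * 2^(d-1) := by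
        conv_lhs => rw [show d = (d-1)+1 from by omega]
        rw [pow_succ]; ring
      have hNlb : Real.sqrt d ≤ (V.card : ℝ) * (2^d * θ^(d-1)) := by
        have t3 : Real.sqrt d * myB (d-1) ≤ ((V.card : ℝ) * (2^d * θ^(d-1))) * myB (d-1) := by
          calc Real.sqrt d * myB (d-1) ≤ 2^d * myB d := hkey
            _ ≤ 2^d * ((V.card : ℝ) * (θ^(d-1) * myB (d-1))) := by
                apply mul_le_mul_of_nonneg_left h1 (by positivity)
            _ = ((V.card : ℝ) * (2^d * θ^(d-1))) * myB (d-1) := by ring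
        exact le_of_mul_le_mul_right t3 hBm
      have expand : Real.sqrt d / 2 * (1/(2*θ))^(d-1) = Real.sqrt d / (2^d * θ^(d-1)) := by
        rw [h2d, div_pow, one_pow, mul_pow]
        field_simp
      have h2πγ : 2 * π * γ = 2 * θ := by rw [hθdef]; ring
      rw [ge_iff_le, h2πγ]
      have : Real.sqrt d / 2 * (1/(2*θ))^(d-1) ≤ (V.card : ℝ) := by
        rw [expand, div_le_iff₀ (by positivity)]
        linarith [hNlb]
      linarith
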